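/- Let A ⊆ ℤ be finite and nonempty with r(A) ≤ N, and let a = min A. Then s_{π(a)}(π(A)) = { x + π(a) − a : x ∈ A }, i.e. the cut at π(a) of the projection of A equals the translate of A by π(a) − a. (Lemma S-suppl-1 of the Supplemental Material.) -/

import Mathlib

/-- `projN N i` is the unique element of `{1, …, N}` congruent to `i` mod `N`. -/
def projN (N i : ℤ) : ℤ := (i - 1) % N + 1

/-- The cut `s_n` of the chain: `s_n i = i` if `i ≥ n`, and `i + N` if `i < n`. -/
def cutN (N n i : ℤ) : ℤ := if n ≤ i then i else i + N

/-- The range `r(A) = max A - min A + 1` of a finite nonempty set, with `r(∅) = 0`. -/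
def rng (A : Finset ℤ) : ℤ := if h : A.Nonempty then A.max' h - A.min' h + 1 else 0

/-- `r_N(A) = min over n ∈ {1,…,N} of r(s_n(A))`. -/
noncomputable def rN (N : ℤ) (A : Finset ℤ) : ℤ :=
  sInf ((fun n => rng (A.image (cutN N n))) '' Set.Icc 1 N)

/-- Lemma S1 of the Supplemental Material: If `A ⊆ ℤ` is finite
and nonempty with `r(A) ≤ N` and `a = min A`, then
`s_{π(a)}(π(A)) = A + π(a) − a`. -/
theorem cut_of_proj_eq_translate (N : ℤ) (hN : 1 ≤ N)
    (A : Finset ℤ) (hA : A.Nonempty) (hr : rng A ≤ N) :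
    (A.image (projN N)).image (cutN N (projN N (A.min' hA))) =
      A.image (fun x => x + projN N (A.min' hA) - A.min' hA) := by
  rw [Finset.image_image]
  apply Finset.image_congr
  intro x hx
  set a := A.min' hA with ha
  have hax : a ≤ x := A.min'_le x hx
  have hxmax : x ≤ A.max' hA := A.le_max' x hx
  have hmin : a ≤ A.max' hA := A.min'_le _ (A.max'_mem hA)
  have hrng : A.max' hA - a + 1 ≤ N := by
    have : rng A = A.max' hA - a + 1 := by rw [rng, dif_pos hA]
    omega
  have hxN : x ≤ a + N - 1 := by omega
  have hNpos : (0:ℤ) < N := by omega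
  set r := (a - 1) % N with hrdef
  have hr0 : 0 ≤ r := Int.emod_nonneg _ (by omega)
  have hrN : r < N := Int.emod_lt_of_pos _ hNpos
  set d := x - a with hd
  have hd0 : 0 ≤ d := by omega
  have hdN : d ≤ N - 1 := by omega
  have hx1 : x - 1 = (a - 1) + d := by omega
  have hxe : (x - 1) % N = (r + d) % N := by
    rw [hx1, Int.add_emod, Int.add_emod r d, hrdef, Int.emod_emod_of_dvd _ dvd_rfl]
  simp only [Function.comp, cutN, projN]
  by_cases hcase : r + d < N
  · have h1 : (r + d) % N = r + d := Int.emod_eq_of_lt (by omega) hcase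
    simp only [hxe, h1]
    rw [if_pos (by omega)]
    omega
  · have h1 : (r + d) % N = r + d - N := by
      have : (r + d) % N = (r + d - N) % N := by
        rw [Int.sub_emod, Int.emod_self, sub_zero, Int.emod_emod_of_dvd _ dvd_rfl]
      rw [this, Int.emod_eq_of_lt (by omega) (by omega)]
    simp only [hxe, h1]
    rw [if_neg (by omega)]
    omega
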